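/- Rounding a fractional solution of the bilinear relaxation of BQAP1 by the round-x optimize-y procedure does not increase the objective: let m, n be positive integers, (q, c, d) a BQAP1 instance, and x y : Fin m → Fin n → ℝ with all entries nonnegative, ∑_{j} x i j = 1 for every i : Fin m, and ∑_{k} y k l = 1 for every l : Fin n. Suppose σ : Fin m → Fin n satisfies, for every i and every j : Fin n, c i (σ i) + ∑_{k,l} q i (σ i) k l · y k l ≤ c i j + ∑_{k,l} q i j k l · y k l, and τ : Fin n → Fin m satisfies, for every l and every k : Fin m, d (τ l) l + ∑_{i} q i (σ i) (τ l) l ≤ d k l + ∑_{i} q i (σ i) k l. Then f1(σ,τ) ≤ F1(x,y). -/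

import Mathlib

/-- Objective function of BQAP1. -/
noncomputable def f1 {m n : ℕ} (q : Fin m → Fin n → Fin m → Fin n → ℝ)
    (c d : Fin m → Fin n → ℝ) (σ : Fin m → Fin n) (τ : Fin n → Fin m) : ℝ :=
  (∑ i, ∑ l, q i (σ i) (τ l) l) + (∑ i, c i (σ i)) + (∑ l, d (τ l) l)

/-- Objective function of the bilinear relaxation BLP1. -/
noncomputable def F1 {m n : ℕ} (q : Fin m → Fin n → Fin m → Fin n → ℝ)
    (c d : Fin m → Fin n → ℝ) (x y : Fin m → Fin n → ℝ) : ℝ :=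
  (∑ i, ∑ j, ∑ k, ∑ l, q i j k l * x i j * y k l)
    + (∑ i, ∑ j, c i j * x i j) + (∑ k, ∑ l, d k l * y k l)

theorem rounding_RxOy_BQAP1 (m n : ℕ) (hm : 0 < m) (hn : 0 < n)
    (q : Fin m → Fin n → Fin m → Fin n → ℝ) (c d : Fin m → Fin n → ℝ)
    (x y : Fin m → Fin n → ℝ)
    (hx0 : ∀ i j, 0 ≤ x i j) (hy0 : ∀ k l, 0 ≤ y k l)
    (hx1 : ∀ i, (∑ j, x i j) = 1) (hy1 : ∀ l, (∑ k, y k l) = 1)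
    (σ : Fin m → Fin n)
    (hσ : ∀ (i : Fin m) (j : Fin n),
      c i (σ i) + ∑ k, ∑ l, q i (σ i) k l * y k l ≤
        c i j + ∑ k, ∑ l, q i j k l * y k l)
    (τ : Fin n → Fin m)
    (hτ : ∀ (l : Fin n) (k : Fin m),
      d (τ l) l + ∑ i, q i (σ i) (τ l) l ≤ d k l + ∑ i, q i (σ i) k l) :
    f1 q c d σ τ ≤ F1 q c d x y := by
  set A : Fin m → Fin n → ℝ := fun i j => c i j + ∑ k, ∑ l, q i j k l * y k l with hA
  set B : Fin m → Fin n → ℝ := fun k l => d k l + ∑ i, q i (σ i) k l with hB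
  have key1 : ∀ i j, x i j * A i j
      = c i j * x i j + ∑ k, ∑ l, q i j k l * x i j * y k l := by
    intro i j
    simp only [hA, mul_add, Finset.mul_sum]
    congr 1
    · ring
    · exact Finset.sum_congr rfl fun k _ =>
        Finset.sum_congr rfl fun l _ => by ring
  have hF1 : F1 q c d x y
      = (∑ i, ∑ j, x i j * A i j) + (∑ k, ∑ l, d k l * y k l) := by
    simp only [F1, key1, Finset.sum_add_distrib]
    ring
  have step1 : (∑ i, A i (σ i)) + (∑ k, ∑ l, d k l * y k l) ≤ F1 q c d x y := by
    rw [hF1]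
    apply add_le_add_left
    apply Finset.sum_le_sum
    intro i _
    calc A i (σ i) = ∑ j, x i j * A i (σ i) := by
            rw [← Finset.sum_mul, hx1, one_mul]
      _ ≤ ∑ j, x i j * A i j :=
            Finset.sum_le_sum fun j _ => mul_le_mul_of_nonneg_left (hσ i j) (hx0 i j)
  have key2 : ∀ (l : Fin n) (k : Fin m), y k l * B k l
      = d k l * y k l + ∑ i, q i (σ i) k l * y k l := by
    intro l k
    simp only [hB, mul_add, Finset.mul_sum]
    congr 1
    · ring
    · exact Finset.sum_congr rfl fun i _ => by ring
  have e1 : (∑ i, ∑ k, ∑ l, q i (σ i) k l * y k l)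
      = ∑ l, ∑ k, ∑ i, q i (σ i) k l * y k l := by
    calc (∑ i, ∑ k, ∑ l, q i (σ i) k l * y k l)
        = ∑ k, ∑ i, ∑ l, q i (σ i) k l * y k l := Finset.sum_comm
      _ = ∑ k, ∑ l, ∑ i, q i (σ i) k l * y k l :=
          Finset.sum_congr rfl fun k _ => Finset.sum_comm
      _ = ∑ l, ∑ k, ∑ i, q i (σ i) k l * y k l := Finset.sum_comm
  have e2 : (∑ k, ∑ l, d k l * y k l) = ∑ l, ∑ k, d k l * y k l :=
    Finset.sum_comm
  have hG : (∑ i, A i (σ i)) + (∑ k, ∑ l, d k l * y k l)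
      = (∑ i, c i (σ i)) + ∑ l, ∑ k, y k l * B k l := by
    simp only [hA, key2, Finset.sum_add_distrib]
    rw [e1, e2]
    ring
  have step2 : f1 q c d σ τ ≤ (∑ i, c i (σ i)) + ∑ l, ∑ k, y k l * B k l := by
    have h1 : f1 q c d σ τ = (∑ i, c i (σ i)) + ∑ l, B (τ l) l := by
      simp only [f1, hB, Finset.sum_add_distrib]
      rw [Finset.sum_comm (f := fun i l => q i (σ i) (τ l) l)]
      ring
    rw [h1]
    apply add_le_add_right
    apply Finset.sum_le_sum
    intro l _
    calc B (τ l) l = ∑ k, y k l * B (τ l) l := by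
            rw [← Finset.sum_mul, hy1, one_mul]
      _ ≤ ∑ k, y k l * B k l :=
            Finset.sum_le_sum fun k _ => mul_le_mul_of_nonneg_left (hτ l k) (hy0 k l)
  calc f1 q c d σ τ ≤ _ := step2
    _ = _ := hG.symm
    _ ≤ _ := step1
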